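/- Let X and Y be independent random variables with values in measurable spaces 𝒳 and 𝒴, let 𝖽 : 𝒳 × 𝒴 → [0,∞) be jointly measurable with E[𝖽(X,Y)³] < ∞, let λ ≥ 0 and c ≥ 0, and define ȷ(x) = −λ c − ln E[exp(−λ 𝖽(x,Y))] (expectation over Y only). Then the centered third absolute moment satisfies E[ |ȷ(X) − E[ȷ(X)]|³ ] ≤ 32 λ³ ( E[𝖽(X,Y)³] + c³ ). (This is the per-coordinate third-moment estimate used in the converse proof of the paper's Theorem 1 to verify the Berry–Esseen moment condition for the d-tilted information.) -/

import Mathlib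

open MeasureTheory ProbabilityTheory

/-- Per-coordinate centered third absolute moment bound for the d-tilted information:
`E[|ȷ(X) − E[ȷ(X)]|³] ≤ 32 λ³ (E[d(X,Y)³] + c³)`. -/
theorem third_moment_tilted_information_le
    {α β : Type*} [MeasurableSpace α] [MeasurableSpace β]
    (μ : Measure α) (ν : Measure β) [IsProbabilityMeasure μ] [IsProbabilityMeasure ν]
    (dist : α → β → ℝ) (hmeas : Measurable (Function.uncurry dist))
    (hnn : ∀ x y, 0 ≤ dist x y)
    (hint : Integrable (fun p : α × β => (dist p.1 p.2) ^ 3) (μ.prod ν))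
    (lam c : ℝ) (hlam : 0 ≤ lam) (hc : 0 ≤ c)
    (j : α → ℝ)
    (hj : ∀ x, j x = -lam * c - Real.log (∫ y, Real.exp (-lam * dist x y) ∂ν)) :
    (∫ x, |j x - ∫ x', j x' ∂μ| ^ 3 ∂μ) ≤
      32 * lam ^ 3 * ((∫ p : α × β, (dist p.1 p.2) ^ 3 ∂(μ.prod ν)) + c ^ 3) := by
  classical
  set F : α → ℝ := fun x => ∫ y, Real.exp (-lam * dist x y) ∂ν with hFdef
  set g : α → ℝ := fun x => -Real.log (F x) with hgdef
  set L : α → ℝ := fun x => ∫ y, dist x y ^ 3 ∂ν with hLdef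
  have hdx : ∀ x, Measurable (dist x) := fun x =>
    hmeas.comp (measurable_const.prodMk measurable_id)
  -- exp integrand integrable in y for each x
  have hexpint : ∀ x, Integrable (fun y => Real.exp (-lam * dist x y)) ν := by
    intro x
    refine Integrable.mono' (integrable_const 1)
      ((((hdx x).const_mul (-lam)).exp).aestronglyMeasurable) ?_
    filter_upwards with y
    rw [Real.norm_eq_abs, abs_of_pos (Real.exp_pos _)]
    exact Real.exp_le_one_iff.2 (mul_nonpos_of_nonpos_of_nonneg (neg_nonpos.2 hlam) (hnn x y))
  -- 0 ≤ F x ≤ 1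
  have hF0 : ∀ x, 0 ≤ F x := fun x =>
    integral_nonneg fun y => (Real.exp_pos _).le
  have hF1 : ∀ x, F x ≤ 1 := by
    intro x
    calc F x ≤ ∫ _ : β, (1 : ℝ) ∂ν := by
          refine integral_mono (hexpint x) (integrable_const 1) fun y => ?_
          exact Real.exp_le_one_iff.2
            (mul_nonpos_of_nonpos_of_nonneg (neg_nonpos.2 hlam) (hnn x y))
      _ = 1 := by simp
  have hg0 : ∀ x, 0 ≤ g x := fun x =>
    neg_nonneg.2 (Real.log_nonpos (hF0 x) (hF1 x))
  -- measurability of g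
  have hFm : StronglyMeasurable F := by
    apply MeasureTheory.StronglyMeasurable.integral_prod_right'
      (f := fun p : α × β => Real.exp (-lam * dist p.1 p.2))
    exact ((hmeas.const_mul (-lam)).exp).stronglyMeasurable
  have hgm : StronglyMeasurable g := (hFm.measurable.log.neg).stronglyMeasurable
  -- L is integrable with integral = double integral
  have hLint : Integrable L μ := hint.integral_prod_left
  have hL0 : ∀ x, 0 ≤ L x := fun x =>
    integral_nonneg fun y => pow_nonneg (hnn x y) 3
  have hLeq : (∫ p : α × β, (dist p.1 p.2) ^ 3 ∂(μ.prod ν)) = ∫ x, L x ∂μ :=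
    integral_prod _ hint
  -- key a.e. bound: g x ^ 3 ≤ lam^3 * L x
  have hkey : ∀ᵐ x ∂μ, g x ^ 3 ≤ lam ^ 3 * L x := by
    filter_upwards [hint.prod_right_ae] with x h3
    -- dist x is integrable
    have hd1 : Integrable (dist x) ν := by
      refine Integrable.mono' ((integrable_const 1).add h3)
        (hdx x).aestronglyMeasurable ?_
      filter_upwards with y
      rw [Real.norm_eq_abs, abs_of_nonneg (hnn x y)]
      simp only [Pi.add_apply]
      have h := hnn x y
      nlinarith [sq_nonneg (dist x y - 1), sq_nonneg (dist x y + 1), sq_nonneg (dist x y)]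
    -- Jensen for exp: exp(∫ -lam d) ≤ F x
    have hjensen1 : Real.exp (∫ y, -lam * dist x y ∂ν) ≤ F x := by
      have := convexOn_exp.map_integral_le (μ := ν)
        (f := fun y => -lam * dist x y)
        Real.continuous_exp.continuousOn isClosed_univ
        (Filter.Eventually.of_forall fun y => Set.mem_univ _)
        (hd1.const_mul (-lam)) ?_
      · exact this
      · exact (hexpint x).congr (Filter.Eventually.of_forall fun y => rfl)
    have hgle : g x ≤ lam * ∫ y, dist x y ∂ν := by
      have hFpos : 0 < F x := lt_of_lt_of_le (Real.exp_pos _) hjensen1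
      have := (Real.le_log_iff_exp_le hFpos).2 hjensen1
      have hInt : (∫ y, -lam * dist x y ∂ν) = -(lam * ∫ y, dist x y ∂ν) := by
        rw [integral_const_mul]; ring
      rw [hInt] at this
      simp only [hgdef]
      linarith
    -- Jensen for pow 3: (∫ d)³ ≤ ∫ d³
    have hjensen2 : (∫ y, dist x y ∂ν) ^ 3 ≤ L x := by
      have := (convexOn_pow (𝕜 := ℝ) 3).map_integral_le (μ := ν)
        (f := fun y => dist x y)
        (continuous_pow 3).continuousOn isClosed_Ici
        (Filter.Eventually.of_forall fun y => hnn x y)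
        hd1 (h3.congr (Filter.Eventually.of_forall fun y => rfl))
      exact this
    have hd0 : 0 ≤ ∫ y, dist x y ∂ν := integral_nonneg fun y => hnn x y
    calc g x ^ 3 ≤ (lam * ∫ y, dist x y ∂ν) ^ 3 :=
          pow_le_pow_left₀ (hg0 x) hgle 3
      _ = lam ^ 3 * (∫ y, dist x y ∂ν) ^ 3 := by ring
      _ ≤ lam ^ 3 * L x := by
          exact mul_le_mul_of_nonneg_left hjensen2 (pow_nonneg hlam 3)
  -- integrability of g³ and g
  have hg3int : Integrable (fun x => g x ^ 3) μ := by
    refine Integrable.mono' (hLint.const_mul (lam ^ 3))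
      ((hgm.measurable.pow_const 3).stronglyMeasurable.aestronglyMeasurable) ?_
    filter_upwards [hkey] with x hx
    rw [Real.norm_eq_abs, abs_of_nonneg (pow_nonneg (hg0 x) 3)]
    exact hx
  have hgint : Integrable g μ := by
    refine Integrable.mono' ((integrable_const 1).add hg3int)
      hgm.aestronglyMeasurable ?_
    filter_upwards with x
    rw [Real.norm_eq_abs, abs_of_nonneg (hg0 x)]
    simp only [Pi.add_apply]
    have h := hg0 x
    nlinarith [sq_nonneg (g x - 1), sq_nonneg (g x + 1), sq_nonneg (g x)]
  -- j = const + g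
  have hjeq : j = fun x => -lam * c + g x := by
    funext x; rw [hj x]; simp [hgdef, hFdef]; ring
  have hjint : Integrable j μ := by
    rw [hjeq]; exact (integrable_const _).add hgint
  set G : ℝ := ∫ x, g x ∂μ with hGdef
  have hG0 : 0 ≤ G := integral_nonneg fun x => hg0 x
  have hm : (∫ x', j x' ∂μ) = -lam * c + G := by
    rw [hjeq, integral_add (integrable_const _) hgint, integral_const]
    simp [hGdef]
  -- Jensen: G³ ≤ ∫ g³
  have hjensen3 : G ^ 3 ≤ ∫ x, g x ^ 3 ∂μ := by
    have := (convexOn_pow (𝕜 := ℝ) 3).map_integral_le (μ := μ) (f := g)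
      (continuous_pow 3).continuousOn isClosed_Ici
      (Filter.Eventually.of_forall fun x => hg0 x)
      hgint (hg3int.congr (Filter.Eventually.of_forall fun y => rfl))
    exact this
  -- ∫ g³ ≤ lam³ ∫ L
  have hg3le : (∫ x, g x ^ 3 ∂μ) ≤ lam ^ 3 * ∫ x, L x ∂μ := by
    rw [← integral_const_mul]
    exact integral_mono_ae hg3int (hLint.const_mul _) hkey
  have hLpos : 0 ≤ ∫ x, L x ∂μ := integral_nonneg fun x => hL0 x
  -- main estimate
  have hmain : (∫ x, |j x - ∫ x', j x' ∂μ| ^ 3 ∂μ) ≤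
      ∫ x, (4 * g x ^ 3 + 4 * G ^ 3) ∂μ := by
    refine integral_mono_of_nonneg ?_ ((hg3int.const_mul 4).add (integrable_const _)) ?_
    · filter_upwards with x
      positivity
    · filter_upwards with x
      rw [hm, hjeq]
      have h1 : -lam * c + g x - (-lam * c + G) = g x - G := by ring
      rw [h1]
      have ha : |g x - G| ≤ g x + G := by
        rw [abs_sub_le_iff]
        constructor <;> [linarith [hG0]; linarith [hg0 x]]
      have h2 : |g x - G| ^ 3 ≤ (g x + G) ^ 3 :=
        pow_le_pow_left₀ (abs_nonneg _) ha 3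
      have h3 : (g x + G) ^ 3 ≤ 4 * g x ^ 3 + 4 * G ^ 3 := by
        nlinarith [hg0 x, hG0, sq_nonneg (g x - G), sq_nonneg (g x + G),
          mul_nonneg (hg0 x) hG0, mul_nonneg (mul_nonneg (hg0 x) hG0) (hg0 x),
          mul_nonneg (mul_nonneg (hg0 x) hG0) hG0]
      linarith
  have hsum : (∫ x, (4 * g x ^ 3 + 4 * G ^ 3) ∂μ) = 4 * (∫ x, g x ^ 3 ∂μ) + 4 * G ^ 3 := by
    rw [integral_add (hg3int.const_mul 4) (integrable_const _), integral_const_mul,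
      integral_const]
    simp
  rw [hLeq]
  have hfinal : 4 * (∫ x, g x ^ 3 ∂μ) + 4 * G ^ 3 ≤
      32 * lam ^ 3 * ((∫ x, L x ∂μ) + c ^ 3) := by
    have h8 : 4 * (∫ x, g x ^ 3 ∂μ) + 4 * G ^ 3 ≤ 8 * (∫ x, g x ^ 3 ∂μ) := by
      linarith [hjensen3]
    have : 8 * (∫ x, g x ^ 3 ∂μ) ≤ 8 * (lam ^ 3 * ∫ x, L x ∂μ) := by linarith [hg3le]
    have hcl : 0 ≤ lam ^ 3 := pow_nonneg hlam 3
    have hcc : 0 ≤ c ^ 3 := pow_nonneg hc 3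
    nlinarith [mul_nonneg hcl hcc, mul_nonneg hcl hLpos]
  calc (∫ x, |j x - ∫ x', j x' ∂μ| ^ 3 ∂μ)
      ≤ ∫ x, (4 * g x ^ 3 + 4 * G ^ 3) ∂μ := hmain
    _ = 4 * (∫ x, g x ^ 3 ∂μ) + 4 * G ^ 3 := hsum
    _ ≤ 32 * lam ^ 3 * ((∫ x, L x ∂μ) + c ^ 3) := hfinal
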